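/- Fix ε₁, ε₂ > 0 and let f be the density of Lap(1/ε₁) and F the CDF of Lap(1/ε₂). Define V_t = ∫_{−∞}^{∞} f(z)·(F(z)(1 − F(z−1)))^t dz and V'_t = ∫_{−∞}^{∞} f(z)·(F(z−1)(1 − F(z)))^t dz. Then for every E > 0 there exists a natural number t such that V_t > e^E · V'_t. -/

import Mathlib

open MeasureTheory Real Set

/-- Density of the Laplace distribution with location 0 and scale `1/ε`. -/
noncomputable def lapDensity (ε x : ℝ) : ℝ :=
  (ε / 2) * Real.exp (-(ε * |x|))

/-- CDF of the Laplace distribution with location 0 and scale `1/ε`. -/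
noncomputable def lapCDF (ε z : ℝ) : ℝ :=
  if z ≤ 0 then Real.exp (ε * z) / 2 else 1 - Real.exp (-(ε * z)) / 2

lemma lapCDF_pos {ε : ℝ} (hε : 0 < ε) (z : ℝ) : 0 < lapCDF ε z := by
  unfold lapCDF
  split_ifs with h
  · positivity
  · have h1 : Real.exp (-(ε * z)) < 1 := by
      rw [Real.exp_lt_one_iff]; push_neg at h; nlinarith
    linarith

lemma lapCDF_lt_one {ε : ℝ} (hε : 0 < ε) (z : ℝ) : lapCDF ε z < 1 := by
  unfold lapCDF
  split_ifs with h
  · have h1 : Real.exp (ε * z) ≤ 1 := by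
      rw [Real.exp_le_one_iff]; nlinarith
    linarith
  · have := Real.exp_pos (-(ε * z)); linarith

lemma measurable_lapCDF (ε : ℝ) : Measurable (lapCDF ε) := by
  unfold lapCDF
  exact Measurable.ite measurableSet_Iic (by fun_prop) (by fun_prop)

lemma integrable_lapDensity {ε : ℝ} (hε : 0 < ε) : Integrable (lapDensity ε) := by
  have h2 : IntegrableOn (fun x : ℝ => Real.exp (-(ε * |x|))) (Ioi 0) := by
    refine (exp_neg_integrableOn_Ioi 0 hε).congr_fun (fun x hx => ?_) measurableSet_Ioi
    rw [abs_of_pos hx]; ring_nf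
  have h4 : Integrable (fun x : ℝ => Real.exp (-(ε * |x|))) := by
    rw [← integrableOn_univ, ← @Iio_union_Ici _ _ (0 : ℝ), integrableOn_union,
      integrableOn_Ici_iff_integrableOn_Ioi]
    refine ⟨?_, h2⟩
    rw [← (Measure.measurePreserving_neg (volume : Measure ℝ)).integrableOn_comp_preimage
        (Homeomorph.neg ℝ).measurableEmbedding]
    simpa [Function.comp_def, abs_neg, neg_preimage, neg_Iio, neg_zero] using h2
  exact h4.const_mul (ε / 2)

lemma key_ineq {ε : ℝ} (hε : 0 < ε) (z : ℝ) :
    Real.exp ε * (lapCDF ε (z - 1) * (1 - lapCDF ε z)) ≤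
      lapCDF ε z * (1 - lapCDF ε (z - 1)) := by
  have hz1 : z - 1 ≤ 0 ↔ z ≤ 1 := by constructor <;> intro <;> linarith
  unfold lapCDF
  rcases le_or_gt z 0 with h0 | h0
  · have h1 : z - 1 ≤ 0 := by linarith
    simp only [if_pos h0, if_pos h1]
    have e1 : Real.exp (ε * (z - 1)) ≤ Real.exp (ε * z) := by
      apply Real.exp_le_exp.mpr; nlinarith
    have e2 : Real.exp ε * (Real.exp (ε * (z - 1)) / 2) = Real.exp (ε * z) / 2 := by
      rw [← mul_div_assoc, ← Real.exp_add, show ε + ε * (z - 1) = ε * z by ring]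
    nlinarith [Real.exp_pos (ε * z), Real.exp_pos (ε * (z - 1))]
  · rcases le_or_gt z 1 with h1 | h1
    · have h1' : z - 1 ≤ 0 := by linarith
      simp only [if_neg (not_le.mpr h0), if_pos h1']
      have e1 : Real.exp (ε * (z - 1)) ≤ 1 := by
        rw [Real.exp_le_one_iff]; nlinarith
      have e2 : Real.exp (-(ε * z)) ≤ 1 := by
        rw [Real.exp_le_one_iff]; nlinarith
      have e3 : Real.exp ε * (Real.exp (ε * (z - 1)) * Real.exp (-(ε * z))) = 1 := by
        rw [← Real.exp_add, ← Real.exp_add,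
          show ε + (ε * (z - 1) + -(ε * z)) = 0 by ring, Real.exp_zero]
      nlinarith [Real.exp_pos (ε * (z - 1)), Real.exp_pos (-(ε * z)), Real.exp_pos ε]
    · have h1' : ¬ z - 1 ≤ 0 := by intro h; linarith
      simp only [if_neg (not_le.mpr h0), if_neg h1']
      have e1 : Real.exp (-(ε * z)) ≤ Real.exp (-(ε * (z - 1))) := by
        apply Real.exp_le_exp.mpr; nlinarith
      have e2 : Real.exp ε * Real.exp (-(ε * z)) = Real.exp (-(ε * (z - 1))) := by
        rw [← Real.exp_add, show ε + -(ε * z) = -(ε * (z - 1)) by ring]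
      nlinarith [Real.exp_pos (-(ε * z)), Real.exp_pos (-(ε * (z - 1)))]

theorem gptt_not_dp (ε₁ ε₂ : ℝ) (hε₁ : 0 < ε₁) (hε₂ : 0 < ε₂) :
    ∀ E > (0 : ℝ), ∃ t : ℕ,
      (∫ z : ℝ, lapDensity ε₁ z * (lapCDF ε₂ z * (1 - lapCDF ε₂ (z - 1))) ^ t) >
        Real.exp E *
          ∫ z : ℝ, lapDensity ε₁ z * (lapCDF ε₂ (z - 1) * (1 - lapCDF ε₂ z)) ^ t := by
  intro E hE
  obtain ⟨t, ht⟩ := Archimedean.arch E hε₂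
  refine ⟨t + 1, ?_⟩
  set t' := t + 1 with ht'
  have hEt : E < ε₂ * t' := by
    rw [nsmul_eq_mul] at ht
    push_cast [ht']
    nlinarith
  -- basic bounds on the CDF
  have hF0 : ∀ z, 0 < lapCDF ε₂ z := lapCDF_pos hε₂
  have hF1 : ∀ z, lapCDF ε₂ z < 1 := lapCDF_lt_one hε₂
  have hd_pos : ∀ z, 0 < lapDensity ε₁ z := by
    intro z; unfold lapDensity; positivity
  -- integrands
  set g : ℝ → ℝ := fun z => lapDensity ε₁ z * (lapCDF ε₂ z * (1 - lapCDF ε₂ (z - 1))) ^ t'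
  set g' : ℝ → ℝ := fun z => lapDensity ε₁ z * (lapCDF ε₂ (z - 1) * (1 - lapCDF ε₂ z)) ^ t'
  have hmeas : Measurable g := by
    apply Measurable.mul (by unfold lapDensity; fun_prop)
    apply Measurable.pow_const
    exact ((measurable_lapCDF ε₂).mul
      (measurable_const.sub ((measurable_lapCDF ε₂).comp (by fun_prop))))
  have hmeas' : Measurable g' := by
    apply Measurable.mul (by unfold lapDensity; fun_prop)
    apply Measurable.pow_const
    exact (((measurable_lapCDF ε₂).comp (by fun_prop)).mul
      (measurable_const.sub (measurable_lapCDF ε₂)))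
  have hbnd : ∀ (h : ℝ → ℝ), Measurable h →
      (∀ z, 0 ≤ h z) → (∀ z, h z ≤ lapDensity ε₁ z) → Integrable h := by
    intro h hm hnn hle
    refine (integrable_lapDensity hε₁).mono' hm.aestronglyMeasurable ?_
    filter_upwards with z
    rw [Real.norm_eq_abs, abs_of_nonneg (hnn z)]
    exact hle z
  have hfac : ∀ z, 0 ≤ lapCDF ε₂ z * (1 - lapCDF ε₂ (z - 1)) ∧
      lapCDF ε₂ z * (1 - lapCDF ε₂ (z - 1)) ≤ 1 := by
    intro z
    constructor
    · have := hF0 z; have := hF1 (z - 1); nlinarith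
    · have := hF0 z; have := hF1 z; have := hF0 (z - 1); have := hF1 (z - 1); nlinarith
  have hfac' : ∀ z, 0 ≤ lapCDF ε₂ (z - 1) * (1 - lapCDF ε₂ z) ∧
      lapCDF ε₂ (z - 1) * (1 - lapCDF ε₂ z) ≤ 1 := by
    intro z
    constructor
    · have := hF0 (z - 1); have := hF1 z; nlinarith
    · have := hF0 z; have := hF1 z; have := hF0 (z - 1); have := hF1 (z - 1); nlinarith
  have hg_int : Integrable g := by
    refine hbnd g hmeas (fun z => ?_) (fun z => ?_)
    · have := (hfac z).1; have := (hd_pos z).le; positivity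
    · have h1 := (hfac z).1; have h2 := (hfac z).2
      calc g z ≤ lapDensity ε₁ z * 1 ^ t' := by
            apply mul_le_mul_of_nonneg_left (pow_le_pow_left₀ h1 h2 t') (hd_pos z).le
        _ = lapDensity ε₁ z := by simp
  have hg'_int : Integrable g' := by
    refine hbnd g' hmeas' (fun z => ?_) (fun z => ?_)
    · have := (hfac' z).1; have := (hd_pos z).le; positivity
    · have h1 := (hfac' z).1; have h2 := (hfac' z).2
      calc g' z ≤ lapDensity ε₁ z * 1 ^ t' := by
            apply mul_le_mul_of_nonneg_left (pow_le_pow_left₀ h1 h2 t') (hd_pos z).le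
        _ = lapDensity ε₁ z := by simp
  -- pointwise comparison : exp (ε₂ * t') * g' ≤ g
  have hpt : ∀ z, Real.exp (ε₂ * t') * g' z ≤ g z := by
    intro z
    have hk := key_ineq hε₂ z
    have h1 := (hfac' z).1
    have hpow : (Real.exp ε₂) ^ t' * (lapCDF ε₂ (z - 1) * (1 - lapCDF ε₂ z)) ^ t' ≤
        (lapCDF ε₂ z * (1 - lapCDF ε₂ (z - 1))) ^ t' := by
      rw [← mul_pow]
      exact pow_le_pow_left₀ (by positivity) hk t'
    have hexp : Real.exp (ε₂ * t') = (Real.exp ε₂) ^ t' := by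
      rw [← Real.exp_nat_mul]; ring_nf
    calc Real.exp (ε₂ * t') * g' z
        = lapDensity ε₁ z * ((Real.exp ε₂) ^ t' * (lapCDF ε₂ (z - 1) * (1 - lapCDF ε₂ z)) ^ t') := by
          rw [hexp]; simp only [g']; ring
      _ ≤ lapDensity ε₁ z * (lapCDF ε₂ z * (1 - lapCDF ε₂ (z - 1))) ^ t' :=
          mul_le_mul_of_nonneg_left hpow (hd_pos z).le
      _ = g z := rfl
  -- positivity of ∫ g'
  have hg'_pos : 0 < ∫ z, g' z := by
    rw [integral_pos_iff_support_of_nonneg]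
    · have : Function.support g' = univ := by
        ext z
        simp only [Function.mem_support, mem_univ, iff_true]
        have h0 := hF0 (z - 1); have h1 := hF1 z
        have : 0 < g' z := by
          have := hd_pos z
          have h2 : 0 < lapCDF ε₂ (z - 1) * (1 - lapCDF ε₂ z) := by nlinarith
          positivity
        exact ne_of_gt this
      rw [this]
      simp
    · intro z
      have := (hfac' z).1; have := (hd_pos z).le
      simp only [g']; positivity
    · exact hg'_int
  -- conclude
  have hmono : Real.exp (ε₂ * t') * ∫ z, g' z ≤ ∫ z, g z := by
    rw [← integral_const_mul]
    exact integral_mono (hg'_int.const_mul _) hg_int hpt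
  have hstrict : Real.exp E * ∫ z, g' z < Real.exp (ε₂ * t') * ∫ z, g' z := by
    apply mul_lt_mul_of_pos_right _ hg'_pos
    exact Real.exp_lt_exp.mpr hEt
  calc Real.exp E * ∫ z, g' z < Real.exp (ε₂ * t') * ∫ z, g' z := hstrict
    _ ≤ ∫ z, g z := hmono
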